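/- arXiv:1206.1919 — 3 statements merged into one kernel-verified Lean document; each statement's English description precedes it below -/
import Mathlib

section
/- For every nonempty noncrossing chord system S there exist a chord (a,b) ∈ S and a natural number x with a < x < b such that x is not an endpoint of any chord of S. (This is the existence, used in the shelling procedure computing a cylindric canonical ordering, of a free vertex strictly between the endpoints of an innermost chord of the current boundary cycle.) -/
/-- A chord `(a,b)` joins two non-adjacent positions: `a + 2 ≤ b`. -/
def IsChordSystem (S : Finset (ℕ × ℕ)) : Prop :=
  ∀ c ∈ S, c.1 + 2 ≤ c.2

/-- Two chords `(a,b)` and `(c,d)` cross if `a < c < b < d` or `c < a < d < b`. -/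
def ChordsCross (c d : ℕ × ℕ) : Prop :=
  (c.1 < d.1 ∧ d.1 < c.2 ∧ c.2 < d.2) ∨ (d.1 < c.1 ∧ c.1 < d.2 ∧ d.2 < c.2)

/-- A chord system is noncrossing if no two of its chords cross. -/
def Noncrossing (S : Finset (ℕ × ℕ)) : Prop :=
  ∀ c ∈ S, ∀ d ∈ S, ¬ ChordsCross c d

/-- `x` is an endpoint of the chord system `S`. -/
def IsEndpoint (S : Finset (ℕ × ℕ)) (x : ℕ) : Prop :=
  ∃ y, (x, y) ∈ S ∨ (y, x) ∈ S

/-- In every nonempty noncrossing chord system there is a chord `(a,b)` and a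
position `x` strictly between `a` and `b` that is an endpoint of no chord. -/
theorem exists_free_position_of_noncrossing (S : Finset (ℕ × ℕ))
    (hchord : IsChordSystem S) (hnc : Noncrossing S) (hne : S.Nonempty) :
    ∃ c ∈ S, ∃ x : ℕ, c.1 < x ∧ x < c.2 ∧ ¬ IsEndpoint S x := by
  obtain ⟨c, hc, hmin⟩ := S.exists_min_image (fun c => c.2 - c.1) hne
  refine ⟨c, hc, c.1 + 1, Nat.lt_succ_self _, ?_, ?_⟩
  · have := hchord c hc; omega
  · rintro ⟨y, hy | hy⟩
    · -- chord (c.1+1, y) in S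
      have hcy := hchord _ hy
      have hncc := hnc c hc _ hy
      have hcc := hchord c hc
      simp only [ChordsCross] at hncc
      have hyle : y ≤ c.2 := by omega
      have := hmin _ hy
      simp at this hcy
      omega
    · -- chord (y, c.1+1) in S
      have hcy := hchord _ hy
      have hncc := hnc c hc _ hy
      have hcc := hchord c hc
      simp only [ChordsCross] at hncc
      simp at hcy
      omega
end

section
/- Let m ≥ 1 and let p₀, …, p_m be an x-monotone chain in ℝ² whose every edge has slope of absolute value at most 1, with strict inequality for the first edge [p₀,p₁] and the last edge [p_{m−1},p_m]. Let v be the unique point with y(v) − y(p₀) = x(v) − x(p₀) and y(v) − y(p_m) = x(p_m) − x(v) (the apex of the wedge formed by the ray of slope +1 from p₀ and the ray of slope −1 from p_m). Then v does not lie on the body of the chain, y(v) > y(p_i) for every 0 ≤ i ≤ m, for each 0 ≤ i ≤ m the closed segment [v, p_i] intersects the body of the chain exactly in the single point p_i, and for i ≠ j the segments [v, p_i] and [v, p_j] meet only at the point v. (This is the geometric fact guaranteeing that, in the incremental drawing algorithm, after the two strip insertions make the slopes of e_ℓ and e_r strictly smaller than 1 in absolute value, the new vertex v_k and its edges to the consecutive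 neighbours on the upper boundary can be drawn in a planar way.) -/
private lemma keypos {A B dx dy : ℝ} (h0 : 0 < A) (h1 : 0 ≤ A + B) (h2 : 0 ≤ A - B)
    (h3 : 0 < dx) (h4 : 0 ≤ dx - dy) (h5 : 0 ≤ dx + dy)
    (hs : (0 < A + B ∧ 0 < A - B) ∨ (0 < dx - dy ∧ 0 < dx + dy)) :
    0 < A * dx + B * dy := by
  rcases hs with ⟨a, b⟩ | ⟨a, b⟩
  · have c1 : min (A+B) (A-B) * (dx+dy) ≤ (A+B)*(dx+dy) :=
      mul_le_mul_of_nonneg_right (min_le_left _ _) h5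
    have c2 : min (A+B) (A-B) * (dx-dy) ≤ (A-B)*(dx-dy) :=
      mul_le_mul_of_nonneg_right (min_le_right _ _) h4
    have hc : 0 < min (A+B) (A-B) := lt_min a b
    nlinarith [mul_pos hc h3]
  · have c1 : (A+B) * min (dx-dy) (dx+dy) ≤ (A+B)*(dx+dy) :=
      mul_le_mul_of_nonneg_left (min_le_right _ _) h1
    have c2 : (A-B) * min (dx-dy) (dx+dy) ≤ (A-B)*(dx-dy) :=
      mul_le_mul_of_nonneg_left (min_le_left _ _) h2
    have hc : 0 < min (dx-dy) (dx+dy) := lt_min a b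
    nlinarith [mul_pos h0 hc]

private lemma convex_pos {a b c d : ℝ} (ha : 0 ≤ a) (hb : 0 ≤ b) (hab : a + b = 1)
    (hc : 0 < c) (hd : 0 < d) : 0 < a * c + b * d := by
  rcases eq_or_lt_of_le ha with h | h
  · have hb1 : b = 1 := by linarith
    rw [← h, hb1]; simpa using hd
  · nlinarith [mul_pos h hc, mul_nonneg hb hd.le]

private lemma mono_chain {m : ℕ} {f : ℕ → ℝ} (h : ∀ k < m, f k ≤ f (k+1)) :
    ∀ j k, j ≤ k → k ≤ m → f j ≤ f k := by
  intro j k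
  induction k with
  | zero => intro hjk _
            have : j = 0 := by omega
            subst this; rfl
  | succ n ih =>
    intro hjk hkm
    rcases Nat.lt_or_ge j (n+1) with hl | hl
    · exact (ih (by omega) (by omega)).trans (h n (by omega))
    · have : j = n+1 := by omega
      subst this; rfl

private lemma smono_chain {m : ℕ} {f : ℕ → ℝ} (h : ∀ k < m, f k < f (k+1)) :
    ∀ j k, j < k → k ≤ m → f j < f k := by
  intro j k
  induction k with
  | zero => omega
  | succ n ih =>
    intro hjk hkm
    rcases Nat.lt_or_ge j n with hl | hl
    · exact (ih hl (by omega)).trans (h n (by omega))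
    · have he : j = n := by omega
      rw [he]; exact h n (by omega)

/-- The apex `v` of the wedge formed by the ray of slope `+1` from the first
point and the ray of slope `−1` from the last point of an x-monotone chain
whose edges have slopes of absolute value at most `1` (strictly for the first
and last edges) lies strictly above the chain, off its body, and the segments
from `v` to the chain vertices meet the body only at those vertices and
pairwise meet only at `v`. -/
theorem apex_sees_chain (m : ℕ) (hm : 1 ≤ m) (p : Fin (m + 1) → ℝ × ℝ)
    (hmono : ∀ i : Fin m, (p i.castSucc).1 < (p i.succ).1)
    (hslope : ∀ i : Fin m,
      |(p i.succ).2 - (p i.castSucc).2| ≤ (p i.succ).1 - (p i.castSucc).1)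
    (hfirst : |(p (⟨0, by omega⟩ : Fin m).succ).2 - (p (⟨0, by omega⟩ : Fin m).castSucc).2|
      < (p (⟨0, by omega⟩ : Fin m).succ).1 - (p (⟨0, by omega⟩ : Fin m).castSucc).1)
    (hlast : |(p (⟨m - 1, by omega⟩ : Fin m).succ).2 - (p (⟨m - 1, by omega⟩ : Fin m).castSucc).2|
      < (p (⟨m - 1, by omega⟩ : Fin m).succ).1 - (p (⟨m - 1, by omega⟩ : Fin m).castSucc).1)
    (v : ℝ × ℝ)
    (hva : v.2 - (p 0).2 = v.1 - (p 0).1)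
    (hvb : v.2 - (p (Fin.last m)).2 = (p (Fin.last m)).1 - v.1) :
    v ∉ (⋃ i : Fin m, segment ℝ (p i.castSucc) (p i.succ)) ∧
    (∀ i : Fin (m + 1), (p i).2 < v.2) ∧
    (∀ i : Fin (m + 1),
      segment ℝ v (p i) ∩ (⋃ j : Fin m, segment ℝ (p j.castSucc) (p j.succ)) = {p i}) ∧
    (∀ i j : Fin (m + 1), i ≠ j →
      segment ℝ v (p i) ∩ segment ℝ v (p j) = {v}) := by
  classical
  obtain ⟨q, hqk⟩ : ∃ q : ℕ → ℝ × ℝ, ∀ (k : ℕ) (h : k ≤ m), q k = p ⟨k, Nat.lt_succ_of_le h⟩ :=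
    ⟨fun k => p ⟨min k m, Nat.lt_succ_of_le (min_le_right k m)⟩,
     fun k h => congrArg p (Fin.ext (Nat.min_eq_left h))⟩
  -- translated hypotheses
  have hX : ∀ k < m, (q k).1 < (q (k+1)).1 := by
    intro k hk
    rw [hqk k hk.le, hqk (k+1) hk]
    exact hmono ⟨k, hk⟩
  have hS : ∀ k < m, |(q (k+1)).2 - (q k).2| ≤ (q (k+1)).1 - (q k).1 := by
    intro k hk
    rw [hqk k hk.le, hqk (k+1) hk]
    exact hslope ⟨k, hk⟩
  have hF : |(q 1).2 - (q 0).2| < (q 1).1 - (q 0).1 := by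
    rw [hqk 1 hm, hqk 0 (by omega)]
    exact hfirst
  have hL' : |(q m).2 - (q (m-1)).2| < (q m).1 - (q (m-1)).1 := by
    rw [hqk (m-1) (by omega), hqk m le_rfl]
    have e : p (⟨m, by omega⟩ : Fin (m+1)) = p ((⟨m - 1, by omega⟩ : Fin m).succ) :=
      congrArg p (Fin.ext (by simp [Fin.succ]; omega))
    rw [e]
    exact hlast
  -- L and R at the vertices
  have hq0 : q 0 = p 0 := by rw [hqk 0 (by omega)]; exact congrArg p (Fin.ext rfl)
  have hqm : q m = p (Fin.last m) := by rw [hqk m le_rfl]; rfl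
  have hL0 : (v.2 - (q 0).2) + ((q 0).1 - v.1) = 0 := by rw [hq0]; linarith
  have hRm : (v.2 - (q m).2) - ((q m).1 - v.1) = 0 := by rw [hqm]; linarith
  have hLm : ∀ k < m, (v.2 - (q k).2) + ((q k).1 - v.1)
      ≤ (v.2 - (q (k+1)).2) + ((q (k+1)).1 - v.1) := by
    intro k hk
    have h := abs_le.1 (hS k hk)
    linarith [h.1, h.2]
  have hRm' : ∀ k < m, (v.2 - (q (k+1)).2) - ((q (k+1)).1 - v.1)
      ≤ (v.2 - (q k).2) - ((q k).1 - v.1) := by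
    intro k hk
    have h := abs_le.1 (hS k hk)
    linarith [h.1, h.2]
  have hLpos : ∀ k, 1 ≤ k → k ≤ m → 0 < (v.2 - (q k).2) + ((q k).1 - v.1) := by
    intro k h1 hk
    have hstep : (v.2 - (q 0).2) + ((q 0).1 - v.1) < (v.2 - (q 1).2) + ((q 1).1 - v.1) := by
      have h := abs_lt.1 hF
      linarith [h.1, h.2]
    have := mono_chain (f := fun k => (v.2 - (q k).2) + ((q k).1 - v.1)) hLm 1 k h1 hk
    linarith
  have hRpos : ∀ k, k < m → 0 < (v.2 - (q k).2) - ((q k).1 - v.1) := by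
    intro k hk
    have hstep : (v.2 - (q m).2) - ((q m).1 - v.1)
        < (v.2 - (q (m-1)).2) - ((q (m-1)).1 - v.1) := by
      have h := abs_lt.1 hL'
      have hmm : m - 1 + 1 = m := by omega
      linarith [h.1, h.2]
    have hchain := mono_chain (f := fun k => -((v.2 - (q k).2) - ((q k).1 - v.1)))
      (fun k hk => neg_le_neg (hRm' k hk)) k (m-1) (by omega) (by omega)
    simp only [neg_le_neg_iff] at hchain
    linarith
  have hLnn : ∀ k, k ≤ m → 0 ≤ (v.2 - (q k).2) + ((q k).1 - v.1) := by
    intro k hk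
    rcases Nat.eq_zero_or_pos k with h | h
    · subst h; linarith
    · exact (hLpos k h hk).le
  have hRnn : ∀ k, k ≤ m → 0 ≤ (v.2 - (q k).2) - ((q k).1 - v.1) := by
    intro k hk
    rcases Nat.lt_or_ge k m with h | h
    · exact (hRpos k h).le
    · have : k = m := by omega
      subst this; linarith
  have hyd : ∀ k, k ≤ m → 0 < v.2 - (q k).2 := by
    intro k hk
    rcases Nat.eq_zero_or_pos k with h | h
    · subst h
      have := hRpos 0 (by omega)
      linarith
    · have := hLpos k h hk
      have := hRnn k hk
      linarith
  -- the key cross-product positivity along the edges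
  have hkey : ∀ j, j < m →
      0 < (v.2 - (q j).2) * ((q (j+1)).1 - (q j).1)
        + ((q j).1 - v.1) * ((q (j+1)).2 - (q j).2) := by
    intro j hj
    have hdx := hX j hj
    have habs := abs_le.1 (hS j hj)
    refine keypos (hyd j hj.le) (hLnn j hj.le) (hRnn j hj.le)
      (by linarith) (by linarith [habs.1, habs.2]) (by linarith [habs.1, habs.2]) ?_
    rcases Nat.eq_zero_or_pos j with h0 | h0
    · right
      subst h0
      have h := abs_lt.1 hF
      exact ⟨by linarith [h.1, h.2], by linarith [h.1, h.2]⟩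
    · exact Or.inl ⟨hLpos j h0 hj.le, hRpos j hj⟩
  -- the angular coordinate
  obtain ⟨r, hrdef⟩ : ∃ r : ℕ → ℝ, ∀ k, r k = ((q k).1 - v.1) / (v.2 - (q k).2) :=
    ⟨fun k => ((q k).1 - v.1) / (v.2 - (q k).2), fun _ => rfl⟩
  have hrstep : ∀ k < m, r k < r (k+1) := by
    intro k hk
    rw [hrdef k, hrdef (k+1), div_lt_div_iff₀ (hyd k hk.le) (hyd (k+1) hk)]
    nlinarith [hkey k hk]
  have hvmono : ∀ u w, u < w → w ≤ m → r u < r w := smono_chain hrstep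
  -- facts about points on an edge
  have hedge : ∀ j, j < m → ∀ a b x1 x2 : ℝ, 0 ≤ a → 0 ≤ b → a + b = 1 →
      x1 = a * (q j).1 + b * (q (j+1)).1 → x2 = a * (q j).2 + b * (q (j+1)).2 →
      0 < v.2 - x2 ∧ (0 < b → r j < (x1 - v.1)/(v.2 - x2)) ∧
        (b < 1 → (x1 - v.1)/(v.2 - x2) < r (j+1)) := by
    intro j hj a b x1 x2 ha hb hab hx1 hx2
    subst hx1; subst hx2
    have haeq : a = 1 - b := by linarith
    subst haeq
    have hyj := hyd j hj.le
    have hyj1 := hyd (j+1) hj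
    have hble : b ≤ 1 := by linarith
    have hydx : 0 < v.2 - ((1-b) * (q j).2 + b * (q (j+1)).2) := by
      have e : v.2 - ((1-b) * (q j).2 + b * (q (j+1)).2)
          = (1-b) * (v.2 - (q j).2) + b * (v.2 - (q (j+1)).2) := by ring
      rw [e]
      exact convex_pos ha hb (by ring) hyj hyj1
    refine ⟨hydx, ?_, ?_⟩
    · intro hbpos
      rw [hrdef j, div_lt_div_iff₀ hyj hydx]
      nlinarith [mul_pos hbpos (hkey j hj)]
    · intro hblt
      have ha' : 0 < 1 - b := by linarith
      rw [hrdef (j+1), div_lt_div_iff₀ hydx hyj1]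
      have hdx := hX j hj
      have habs := abs_le.1 (hS j hj)
      have keyx : 0 < (v.2 - ((1-b) * (q j).2 + b * (q (j+1)).2)) * ((q (j+1)).1 - (q j).1)
          + (((1-b) * (q j).1 + b * (q (j+1)).1) - v.1) * ((q (j+1)).2 - (q j).2) := by
        have hLx : 0 ≤ (v.2 - ((1-b) * (q j).2 + b * (q (j+1)).2))
            + (((1-b) * (q j).1 + b * (q (j+1)).1) - v.1) := by
          have e : (v.2 - ((1-b) * (q j).2 + b * (q (j+1)).2))
              + (((1-b) * (q j).1 + b * (q (j+1)).1) - v.1)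
              = (1-b) * ((v.2 - (q j).2) + ((q j).1 - v.1))
                + b * ((v.2 - (q (j+1)).2) + ((q (j+1)).1 - v.1)) := by ring
          rw [e]
          exact add_nonneg (mul_nonneg ha (hLnn j hj.le)) (mul_nonneg hb (hLnn (j+1) hj))
        have hRx : 0 ≤ (v.2 - ((1-b) * (q j).2 + b * (q (j+1)).2))
            - (((1-b) * (q j).1 + b * (q (j+1)).1) - v.1) := by
          have e : (v.2 - ((1-b) * (q j).2 + b * (q (j+1)).2))
              - (((1-b) * (q j).1 + b * (q (j+1)).1) - v.1)
              = (1-b) * ((v.2 - (q j).2) - ((q j).1 - v.1))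
                + b * ((v.2 - (q (j+1)).2) - ((q (j+1)).1 - v.1)) := by ring
          rw [e]
          exact add_nonneg (mul_nonneg ha (hRnn j hj.le)) (mul_nonneg hb (hRnn (j+1) hj))
        refine keypos hydx hLx hRx (by linarith) (by linarith [habs.1, habs.2])
          (by linarith [habs.1, habs.2]) ?_
        rcases Nat.eq_zero_or_pos j with h0 | h0
        · right
          subst h0
          have h := abs_lt.1 hF
          exact ⟨by linarith [h.1, h.2], by linarith [h.1, h.2]⟩
        · left
          constructor
          · have e : (v.2 - ((1-b) * (q j).2 + b * (q (j+1)).2))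
                + (((1-b) * (q j).1 + b * (q (j+1)).1) - v.1)
                = (1-b) * ((v.2 - (q j).2) + ((q j).1 - v.1))
                  + b * ((v.2 - (q (j+1)).2) + ((q (j+1)).1 - v.1)) := by ring
            rw [e]
            exact convex_pos ha hb (by ring) (hLpos j h0 hj.le) (hLpos (j+1) (by omega) hj)
          · have e : (v.2 - ((1-b) * (q j).2 + b * (q (j+1)).2))
                - (((1-b) * (q j).1 + b * (q (j+1)).1) - v.1)
                = (1-b) * ((v.2 - (q j).2) - ((q j).1 - v.1))
                  + b * ((v.2 - (q (j+1)).2) - ((q (j+1)).1 - v.1)) := by ring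
            rw [e]
            have h1 := mul_pos ha' (hRpos j hj)
            have h2 := mul_nonneg hb (hRnn (j+1) hj)
            linarith
      nlinarith [mul_pos ha' keyx]
  -- repackage: what membership of an edge gives us
  have hseg' : ∀ (jf : Fin m) (x : ℝ × ℝ), x ∈ segment ℝ (p jf.castSucc) (p jf.succ) →
      ∃ b : ℝ, 0 ≤ b ∧ b ≤ 1 ∧
        0 < v.2 - x.2 ∧
        (0 < b → r jf.val < (x.1 - v.1)/(v.2 - x.2)) ∧
        ((x.1 - v.1)/(v.2 - x.2) < r (jf.val+1) ∨ x = q (jf.val+1)) ∧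
        (b = 0 → x = q jf.val) := by
    intro jf x hx
    have e1 : p jf.castSucc = q jf.val := (hqk jf.val jf.isLt.le).symm
    have e2 : p jf.succ = q (jf.val+1) := (hqk (jf.val+1) jf.isLt).symm
    rw [e1, e2] at hx
    obtain ⟨a, b, ha, hb, hab, hxe⟩ := hx
    have hx1 : x.1 = a * (q jf.val).1 + b * (q (jf.val+1)).1 := by
      have := congrArg Prod.fst hxe
      simpa [smul_eq_mul] using this.symm
    have hx2 : x.2 = a * (q jf.val).2 + b * (q (jf.val+1)).2 := by
      have := congrArg Prod.snd hxe
      simpa [smul_eq_mul] using this.symm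
    obtain ⟨h1, h2, h3⟩ := hedge jf.val jf.isLt a b x.1 x.2 ha hb hab hx1 hx2
    have hble : b ≤ 1 := by linarith
    refine ⟨b, hb, hble, h1, h2, ?_, ?_⟩
    · rcases eq_or_lt_of_le hble with hb1 | hb1
      · right
        have ha0 : a = 0 := by linarith
        exact Prod.ext (by rw [hx1, ha0, hb1]; ring) (by rw [hx2, ha0, hb1]; ring)
      · exact Or.inl (h3 hb1)
    · intro hb0
      have ha1 : a = 1 := by linarith
      exact Prod.ext (by rw [hx1, ha1, hb0]; ring) (by rw [hx2, ha1, hb0]; ring)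
  -- vertices are uniquely determined by their angular coordinate
  have huniq : ∀ w u, w ≤ m → u ≤ m → r w = r u → w = u := by
    intro w u hw hu hr
    by_contra hne
    rcases Nat.lt_or_ge w u with h | h
    · have := hvmono w u h hu; linarith
    · have h' : u < w := by omega
      have := hvmono u w h' hw; linarith
  have hpq : ∀ i : Fin (m+1), p i = q i.val := by
    intro i
    rw [hqk i.val (Nat.lt_succ_iff.mp i.isLt)]
  -- Part 1
  have part1 : v ∉ (⋃ i : Fin m, segment ℝ (p i.castSucc) (p i.succ)) := by
    intro hv
    rw [Set.mem_iUnion] at hv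
    obtain ⟨jf, hjf⟩ := hv
    obtain ⟨b, -, -, h1, -⟩ := hseg' jf v hjf
    linarith
  -- Part 2
  have part2 : ∀ i : Fin (m + 1), (p i).2 < v.2 := by
    intro i
    have him : i.val ≤ m := Nat.lt_succ_iff.mp i.isLt
    have := hyd i.val him
    rw [hpq i] ; linarith
  -- ray coordinate of a point of segment [v, p i]
  have hray : ∀ (i : Fin (m+1)) (x : ℝ × ℝ), x ∈ segment ℝ v (p i) → x ≠ v →
      0 < v.2 - x.2 ∧ (x.1 - v.1)/(v.2 - x.2) = r i.val := by
    intro i x hx hxv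
    have him : i.val ≤ m := Nat.lt_succ_iff.mp i.isLt
    rw [hpq i] at hx
    obtain ⟨c, t, hc, ht, hct, hxe⟩ := hx
    have hy1 : x.1 = c * v.1 + t * (q i.val).1 := by
      have := congrArg Prod.fst hxe
      simpa [smul_eq_mul] using this.symm
    have hy2 : x.2 = c * v.2 + t * (q i.val).2 := by
      have := congrArg Prod.snd hxe
      simpa [smul_eq_mul] using this.symm
    have hydi := hyd i.val him
    have hc' : c = 1 - t := by linarith
    have ht0 : 0 < t := by
      rcases eq_or_lt_of_le ht with h | h
      · exfalso
        apply hxv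
        exact Prod.ext (by rw [hy1, hc', ← h]; ring) (by rw [hy2, hc', ← h]; ring)
      · exact h
    have e2' : v.2 - x.2 = t * (v.2 - (q i.val).2) := by
      rw [hy2, hc']; ring
    constructor
    · rw [e2']
      exact mul_pos ht0 hydi
    · have e1' : x.1 - v.1 = t * ((q i.val).1 - v.1) := by
        rw [hy1, hc']; ring
      rw [e1', e2', mul_div_mul_left _ _ (ne_of_gt ht0), hrdef i.val]
  -- Part 3
  have part3 : ∀ i : Fin (m + 1),
      segment ℝ v (p i) ∩ (⋃ j : Fin m, segment ℝ (p j.castSucc) (p j.succ)) = {p i} := by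
    intro i
    have him : i.val ≤ m := Nat.lt_succ_iff.mp i.isLt
    apply Set.eq_singleton_iff_unique_mem.mpr
    constructor
    · refine ⟨right_mem_segment ℝ v (p i), ?_⟩
      rw [Set.mem_iUnion]
      rcases Nat.lt_or_ge i.val m with hi | hi
      · exact ⟨⟨i.val, hi⟩, left_mem_segment ℝ _ _⟩
      · have him' : i.val = m := by omega
        refine ⟨⟨m-1, by omega⟩, ?_⟩
        have e : p ((⟨m-1, by omega⟩ : Fin m).succ) = p i :=
          congrArg p (Fin.ext (by simp [Fin.succ]; omega))
        rw [← e]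
        exact right_mem_segment ℝ _ _
    · rintro x ⟨hxseg, hxun⟩
      rw [Set.mem_iUnion] at hxun
      obtain ⟨jf, hjf⟩ := hxun
      obtain ⟨b, hb0', hb1', hydx, hrl, hrr, hq0'⟩ := hseg' jf x hjf
      have hxv : x ≠ v := by
        intro h
        rw [h] at hydx
        linarith
      obtain ⟨hydx', hrx⟩ := hray i x hxseg hxv
      have hj := jf.isLt
      rcases eq_or_lt_of_le hb0' with hb0 | hbpos
      · have hxq := hq0' hb0.symm
        have hiv : jf.val = i.val := by
          apply huniq jf.val i.val hj.le him
          rw [← hrx, hxq, hrdef jf.val]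
        rw [hxq, hpq i, ← hiv]
      · have h1 := hrl hbpos
        rw [hrx] at h1
        rcases hrr with h2 | hxq
        · exfalso
          rw [hrx] at h2
          rcases Nat.lt_or_ge i.val (jf.val+1) with h | h
          · rcases Nat.lt_or_ge i.val jf.val with h' | h'
            · have := hvmono i.val jf.val h' hj.le
              linarith
            · have he : i.val = jf.val := by omega
              rw [he] at h1
              linarith
          · rcases eq_or_lt_of_le h with h' | h'
            · rw [h'] at h2
              linarith
            · have := hvmono (jf.val+1) i.val h' him
              linarith
        · have hiv : jf.val + 1 = i.val := by
            apply huniq (jf.val+1) i.val hj him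
            rw [← hrx, hxq, hrdef (jf.val+1)]
          rw [hxq, hpq i, ← hiv]
  -- Part 4
  have part4 : ∀ i j : Fin (m + 1), i ≠ j →
      segment ℝ v (p i) ∩ segment ℝ v (p j) = {v} := by
    intro i j hij
    apply Set.eq_singleton_iff_unique_mem.mpr
    refine ⟨⟨left_mem_segment ℝ v (p i), left_mem_segment ℝ v (p j)⟩, ?_⟩
    rintro x ⟨hxi, hxj⟩
    by_contra hxv
    obtain ⟨hydi, hri⟩ := hray i x hxi hxv
    obtain ⟨hydj, hrj⟩ := hray j x hxj hxv
    have him : i.val ≤ m := Nat.lt_succ_iff.mp i.isLt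
    have hjm : j.val ≤ m := Nat.lt_succ_iff.mp j.isLt
    have : i.val = j.val := huniq i.val j.val him hjm (by rw [← hri, ← hrj])
    exact hij (Fin.ext this)
  exact ⟨part1, part2, part3, part4⟩
end

section
/- Let k ≥ 1, let d : ZMod k → ℝ be a nonnegative function with total sum w, and let y : ZMod k → ℝ satisfy |y(i+1) − y(i)| ≤ d(i) for every i ∈ ZMod k. Then (max over i of y(i)) − (min over i of y(i)) ≤ w/2. (Applied to the cycle C(B₂) drawn on the x-periodic grid of width w, whose edges have slopes at most 1 in absolute value — so the vertical variation along each edge is at most its x-span, and the x-spans sum to w — this is the paper's claim that the vertical span of C(B₂) is at most w/2 ≤ n, used to prove the height bound h ≤ n(2d+1) in Proposition 1.) -/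
lemma cyclic_step (k : ℕ) [NeZero k] (d y : ZMod k → ℝ)
    (hy : ∀ i : ZMod k, |y (i + 1) - y i| ≤ d i) (i : ZMod k) (n : ℕ) :
    |y (i + n) - y i| ≤ ∑ t ∈ Finset.range n, d (i + t) := by
  induction n with
  | zero => simp
  | succ n ih =>
    rw [Finset.sum_range_succ]
    have h1 := hy (i + n)
    have : y (i + (n+1 : ℕ)) - y i = (y (i + n + 1) - y (i + n)) + (y (i + n) - y i) := by
      push_cast; ring_nf
    rw [this]
    calc |(y (i + n + 1) - y (i + n)) + (y (i + n) - y i)|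
        ≤ |y (i + n + 1) - y (i + n)| + |y (i + n) - y i| := abs_add_le _ _
      _ ≤ ∑ t ∈ Finset.range n, d (i + t) + d (i + n) := by
          have := hy (i + n); linarith
      _ = _ := by ring

/-- If `d : ZMod k → ℝ` is nonnegative with total sum `w` and the cyclic sequence
`y : ZMod k → ℝ` satisfies `|y (i+1) - y i| ≤ d i` for all `i`, then the total
vertical variation of `y` is at most `w / 2`. -/
theorem cyclic_variation_le_half_width (k : ℕ) (hk : 1 ≤ k) [NeZero k]
    (d y : ZMod k → ℝ) (w : ℝ)
    (hd : ∀ i, 0 ≤ d i) (hw : ∑ i, d i = w)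
    (hy : ∀ i : ZMod k, |y (i + 1) - y i| ≤ d i) :
    Finset.univ.sup' ⟨0, Finset.mem_univ 0⟩ y
      - Finset.univ.inf' ⟨0, Finset.mem_univ 0⟩ y ≤ w / 2 := by
  obtain ⟨a, -, ha⟩ := Finset.exists_mem_eq_sup' ⟨(0 : ZMod k), Finset.mem_univ 0⟩ y
  obtain ⟨b, -, hb⟩ := Finset.exists_mem_eq_inf' ⟨(0 : ZMod k), Finset.mem_univ 0⟩ y
  rw [ha, hb]
  set m : ℕ := (a - b).val with hm
  have hmk : m ≤ k := le_of_lt (ZMod.val_lt _)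
  have hba : b + (m : ZMod k) = a := by
    rw [hm, ZMod.natCast_val, ZMod.cast_id]; ring
  have hab : a + ((k - m : ℕ) : ZMod k) = b := by
    push_cast [Nat.cast_sub hmk]
    rw [ZMod.natCast_self, hm, ZMod.natCast_val, ZMod.cast_id]; ring
  have h1 : y a - y b ≤ ∑ t ∈ Finset.range m, d (b + t) := by
    have := cyclic_step k d y hy b m
    rw [hba] at this
    exact le_trans (le_abs_self _) this
  have h2 : y a - y b ≤ ∑ t ∈ Finset.range (k - m), d (a + t) := by
    have := cyclic_step k d y hy a (k - m)
    rw [hab] at this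
    calc y a - y b = -(y b - y a) := by ring
      _ ≤ |y b - y a| := neg_le_abs _
      _ ≤ _ := this
  have hsum : ∑ t ∈ Finset.range m, d (b + t) + ∑ t ∈ Finset.range (k - m), d (a + t) = w := by
    have hsplit : ∑ t ∈ Finset.range k, d (b + t)
        = ∑ t ∈ Finset.range m, d (b + t) + ∑ t ∈ Finset.range (k - m), d (b + (m + t : ℕ)) := by
      rw [← Finset.sum_range_add, Nat.add_sub_cancel' hmk]
    have hre : ∀ t : ℕ, d (b + (m + t : ℕ)) = d (a + t) := by
      intro t; congr 1; push_cast; rw [← hba]; ring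
    simp_rw [hre] at hsplit
    rw [← hsplit, ← hw]
    refine Finset.sum_nbij' (i := fun t : ℕ => (b + t : ZMod k)) (j := fun i : ZMod k => (i - b).val) ?_ ?_ ?_ ?_ ?_
    · intro t ht; exact Finset.mem_univ _
    · intro i _; exact Finset.mem_range.mpr (ZMod.val_lt _)
    · intro t ht
      rw [Finset.mem_range] at ht
      show ((b + t : ZMod k) - b).val = t
      have : ((b : ZMod k) + t - b) = (t : ZMod k) := by ring
      rw [this, ZMod.val_natCast_of_lt ht]
    · intro i _
      show b + ((i - b).val : ZMod k) = i
      rw [ZMod.natCast_val, ZMod.cast_id]; ring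
    · intro t _; rfl
  linarith
end
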